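/- For every ε > 0 there exists a constant C = C(ε) > 0 such that for all integers q > N ≥ 1 with q ≥ 2 one has M₂(q,N) ≤ C·N²·q^ε, where M₂(q,N) = φ(q)·∑_{m,n=1}^{N} ∑_{u,v=1, mu ≡ nv (mod q), mu ≠ nv}^{q²} 1/(uv). -/

import Mathlib

open scoped BigOperators

/-- `M₂(q,N) = φ(q) ∑_{m,n=1}^N ∑_{u,v=1, mu ≡ nv (mod q), mu ≠ nv}^{q²} 1/(uv)`. -/
noncomputable def M2 (q N : ℕ) : ℝ :=
  (Nat.totient q : ℝ) *
    ∑ m ∈ Finset.Icc 1 N, ∑ n ∈ Finset.Icc 1 N,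
      ∑ u ∈ Finset.Icc 1 (q ^ 2), ∑ v ∈ Finset.Icc 1 (q ^ 2),
        if m * u ≡ n * v [MOD q] ∧ m * u ≠ n * v then 1 / ((u : ℝ) * (v : ℝ)) else 0

open Finset Real


lemma harmonic_sum_le (M : ℕ) :
    ∑ u ∈ Finset.Icc 1 M, (1:ℝ)/u ≤ 1 + Real.log M := by
  have h := harmonic_le_one_add_log M
  rw [harmonic_eq_sum_Icc] at h
  have heq : ((∑ d ∈ Finset.Icc 1 M, (d:ℚ)⁻¹ : ℚ) : ℝ) = ∑ u ∈ Finset.Icc 1 M, (1:ℝ)/u := by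
    push_cast
    simp [one_div]
  rw [heq] at h
  exact h

lemma divisor_bound {δ : ℝ} (hδ : 0 < δ) :
    ∃ C : ℝ, 1 ≤ C ∧ ∀ n : ℕ, n ≠ 0 → ((n.divisors.card : ℕ) : ℝ) ≤ C * (n:ℝ) ^ δ := by
  classical
  set c₀ : ℝ := 1 + 1/(δ * Real.log 2) with hc₀
  have hlog2 : 0 < Real.log 2 := Real.log_pos one_lt_two
  have hpos : 0 < δ * Real.log 2 := by positivity
  have hc₀1 : 1 ≤ c₀ := by
    have h : 0 < 1/(δ * Real.log 2) := by positivity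
    rw [hc₀]; linarith
  set B : ℕ := ⌈(2:ℝ) ^ (1/δ)⌉₊ with hB
  refine ⟨c₀ ^ (B+1), one_le_pow₀ hc₀1, ?_⟩
  intro n hn
  have key : ∀ p ∈ n.primeFactors,
      ((n.factorization p + 1 : ℕ) : ℝ) ≤
        (if (p:ℝ) ^ δ < 2 then c₀ else 1) * ((p ^ n.factorization p : ℕ) : ℝ) ^ δ := by
    intro p hp
    have hp2 : 2 ≤ p := (Nat.prime_of_mem_primeFactors hp).two_le
    set e := n.factorization p with he
    have hpR : (2:ℝ) ≤ (p:ℝ) := by exact_mod_cast hp2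
    have hcast : ((p ^ e : ℕ) : ℝ) = (p:ℝ) ^ (e:ℕ) := by push_cast; ring
    have hrpow : ((p:ℝ) ^ (e:ℕ)) ^ δ = ((p:ℝ) ^ δ) ^ (e:ℕ) := by
      rw [← Real.rpow_natCast (p:ℝ) e, ← Real.rpow_mul (by positivity),
        mul_comm, Real.rpow_mul (by positivity), Real.rpow_natCast]
    rw [hcast, hrpow]
    by_cases hbad : (p:ℝ) ^ δ < 2
    · rw [if_pos hbad]
      have h2e : ((2:ℝ) ^ δ) ^ (e:ℕ) ≤ ((p:ℝ) ^ δ) ^ (e:ℕ) := by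
        apply pow_le_pow_left₀ (by positivity)
        exact Real.rpow_le_rpow (by norm_num) hpR (le_of_lt hδ)
      have hexp : ((2:ℝ) ^ δ) ^ (e:ℕ) = Real.exp ((e:ℝ) * (δ * Real.log 2)) := by
        rw [← Real.rpow_natCast ((2:ℝ) ^ δ) e,
          ← Real.rpow_mul (by norm_num : (0:ℝ) ≤ 2),
          Real.rpow_def_of_pos (by norm_num : (0:ℝ) < 2)]
        congr 1
        ring
      have hexp_ge : 1 + (e:ℝ) * (δ * Real.log 2) ≤ Real.exp ((e:ℝ) * (δ * Real.log 2)) := by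
        have := Real.add_one_le_exp ((e:ℝ) * (δ * Real.log 2))
        linarith
      have hinv : 0 < 1/(δ * Real.log 2) := by positivity
      have he0 : (0:ℝ) ≤ (e:ℝ) := Nat.cast_nonneg e
      have hc : (e:ℝ) + 1 ≤ c₀ * (1 + (e:ℝ) * (δ * Real.log 2)) := by
        have expand : c₀ * (1 + (e:ℝ) * (δ * Real.log 2))
            = 1 + (e:ℝ) * (δ * Real.log 2) + 1/(δ * Real.log 2) + (e:ℝ) := by
          rw [hc₀]; field_simp; ring
        rw [expand]
        nlinarith
      have h2 : ((e:ℝ) + 1) ≤ c₀ * ((2:ℝ) ^ δ) ^ (e:ℕ) := by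
        rw [hexp]
        calc (e:ℝ) + 1 ≤ c₀ * (1 + (e:ℝ) * (δ * Real.log 2)) := hc
          _ ≤ c₀ * Real.exp ((e:ℝ) * (δ * Real.log 2)) :=
              mul_le_mul_of_nonneg_left hexp_ge (by linarith)
      calc ((e + 1 : ℕ) : ℝ) = (e:ℝ) + 1 := by push_cast; ring
        _ ≤ c₀ * ((2:ℝ) ^ δ) ^ (e:ℕ) := h2
        _ ≤ c₀ * ((p:ℝ) ^ δ) ^ (e:ℕ) := mul_le_mul_of_nonneg_left h2e (by linarith)
    · rw [if_neg hbad, one_mul]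
      push_neg at hbad
      have h1 : ((e + 1 : ℕ) : ℝ) ≤ (2:ℝ) ^ (e:ℕ) := by
        exact_mod_cast (Nat.lt_two_pow_self (n := e))
      calc ((e + 1 : ℕ) : ℝ) ≤ (2:ℝ) ^ (e:ℕ) := h1
        _ ≤ ((p:ℝ) ^ δ) ^ (e:ℕ) := pow_le_pow_left₀ (by norm_num) hbad e
  have hcard : ((n.divisors.card : ℕ) : ℝ)
      = ∏ p ∈ n.primeFactors, ((n.factorization p + 1 : ℕ) : ℝ) := by
    rw [Nat.card_divisors hn]
    push_cast
    rfl
  have hprod_le : ((n.divisors.card : ℕ) : ℝ) ≤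
      (∏ p ∈ n.primeFactors, (if (p:ℝ) ^ δ < 2 then c₀ else 1)) *
      (∏ p ∈ n.primeFactors, ((p ^ n.factorization p : ℕ) : ℝ) ^ δ) := by
    rw [hcard, ← Finset.prod_mul_distrib]
    exact Finset.prod_le_prod (fun p _ => by positivity) key
  have hsplit : (∏ p ∈ n.primeFactors, ((p ^ n.factorization p : ℕ) : ℝ) ^ δ)
      = ((n:ℝ)) ^ δ := by
    rw [Real.finset_prod_rpow _ _ (fun p _ => by positivity)]
    congr 1
    rw [← Nat.cast_prod]
    congr 1
    have := Nat.factorization_prod_pow_eq_self hn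
    rwa [Finsupp.prod] at this
  have hcfactor : (∏ p ∈ n.primeFactors, (if (p:ℝ) ^ δ < 2 then c₀ else 1)) ≤ c₀ ^ (B+1) := by
    rw [Finset.prod_ite, Finset.prod_const, Finset.prod_const, one_pow, mul_one]
    have hsub : (n.primeFactors.filter (fun p : ℕ => (p:ℝ) ^ δ < 2)) ⊆ Finset.range (B+1) := by
      intro p hp
      rw [Finset.mem_filter] at hp
      obtain ⟨-, hpbad⟩ := hp
      have hplt : (p:ℝ) < (2:ℝ) ^ (1/δ) := by
        have h1 : ((p:ℝ) ^ δ) ^ (1/δ) < (2:ℝ) ^ (1/δ) :=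
          Real.rpow_lt_rpow (by positivity) hpbad (by positivity)
        rwa [← Real.rpow_mul (by positivity : (0:ℝ) ≤ (p:ℝ)), mul_one_div_cancel hδ.ne',
          Real.rpow_one] at h1
      have : (p:ℝ) < (B:ℝ) + 1 := lt_of_lt_of_le hplt (le_trans (Nat.le_ceil _) (by linarith))
      rw [Finset.mem_range]
      exact_mod_cast Nat.lt_succ_of_le (Nat.lt_succ_iff.mp (by exact_mod_cast this))
    calc c₀ ^ (n.primeFactors.filter (fun p : ℕ => (p:ℝ) ^ δ < 2)).card
        ≤ c₀ ^ (Finset.range (B+1)).card :=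
          pow_le_pow_right₀ hc₀1 (Finset.card_le_card hsub)
      _ = c₀ ^ (B+1) := by rw [Finset.card_range]
  calc ((n.divisors.card : ℕ) : ℝ)
      ≤ (∏ p ∈ n.primeFactors, (if (p:ℝ) ^ δ < 2 then c₀ else 1)) * ((n:ℝ)) ^ δ := by
        rw [← hsplit]; exact hprod_le
    _ ≤ c₀ ^ (B+1) * ((n:ℝ)) ^ δ :=
        mul_le_mul_of_nonneg_right hcfactor (Real.rpow_nonneg (Nat.cast_nonneg n) δ)

lemma half_bound (q N : ℕ) (hq : 2 ≤ q) (hN : 1 ≤ N) (hNq : N < q)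
    (D : ℝ) (hD0 : 0 ≤ D)
    (hD : ∀ b : ℕ, b ≠ 0 → b ≤ 2*q^3 → ((b.divisors.card : ℕ) : ℝ) ≤ D) :
    ∑ m ∈ Finset.Icc 1 N, ∑ n ∈ Finset.Icc 1 N,
      ∑ u ∈ Finset.Icc 1 (q^2), ∑ v ∈ Finset.Icc 1 (q^2),
        (if m * u ≡ n * v [MOD q] ∧ m * u < n * v then 1 / ((u:ℝ) * (v:ℝ)) else 0)
    ≤ (N:ℝ) * (1 + Real.log (q^2)) * (D * N / q * (1 + Real.log (N*q))) := by
  classical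
  have hq0 : 0 < q := by omega
  set A := Finset.Icc 1 N with hA
  set B := Finset.Icc 1 (q^2) with hBdef
  -- inner bound for fixed m, u
  have inner : ∀ m ∈ A, ∀ u ∈ B,
      (∑ n ∈ A, ∑ v ∈ B,
        (if m * u ≡ n * v [MOD q] ∧ m * u < n * v then 1 / (v:ℝ) else 0))
      ≤ D * N / q * (1 + Real.log (N*q)) := by
    intro m hm u hu
    rw [hA, Finset.mem_Icc] at hm
    rw [hBdef, Finset.mem_Icc] at hu
    have hsum_prod :
        (∑ n ∈ A, ∑ v ∈ B,
          (if m * u ≡ n * v [MOD q] ∧ m * u < n * v then 1 / (v:ℝ) else 0))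
        = ∑ p ∈ (A ×ˢ B).filter
            (fun p : ℕ × ℕ => m * u ≡ p.1 * p.2 [MOD q] ∧ m * u < p.1 * p.2),
            1 / (p.2:ℝ) := by
      rw [Finset.sum_filter, Finset.sum_product]
    rw [hsum_prod]
    set s := (A ×ˢ B).filter
        (fun p : ℕ × ℕ => m * u ≡ p.1 * p.2 [MOD q] ∧ m * u < p.1 * p.2) with hs
    have hmem : ∀ p ∈ s, (1 ≤ p.1 ∧ p.1 ≤ N) ∧ (1 ≤ p.2 ∧ p.2 ≤ q^2) ∧
        m * u ≡ p.1 * p.2 [MOD q] ∧ m * u < p.1 * p.2 := by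
      intro p hp
      rw [hs, Finset.mem_filter, Finset.mem_product, hA, hBdef,
        Finset.mem_Icc, Finset.mem_Icc] at hp
      tauto
    have hkey : ∀ p ∈ s, p.1 * p.2 = m * u + ((p.1 * p.2 - m * u) / q) * q ∧
        q ∣ (p.1 * p.2 - m * u) := by
      intro p hp
      obtain ⟨hn, hv, hmod, hlt⟩ := hmem p hp
      have hdvd : q ∣ (p.1 * p.2 - m * u) := (Nat.modEq_iff_dvd' hlt.le).mp hmod
      constructor
      · rw [Nat.div_mul_cancel hdvd]
        omega
      · exact hdvd
    have hmaps : ∀ p ∈ s, (p.1 * p.2 - m * u) / q ∈ Finset.Icc 1 (N*q) := by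
      intro p hp
      obtain ⟨hn, hv, hmod, hlt⟩ := hmem p hp
      obtain ⟨heq, hdvd⟩ := hkey p hp
      rw [Finset.mem_Icc]
      constructor
      · have hpos : 0 < p.1 * p.2 - m * u := by omega
        have hle : q ≤ p.1 * p.2 - m * u := Nat.le_of_dvd hpos hdvd
        exact Nat.one_le_div_iff hq0 |>.mpr hle
      · have h1 : p.1 * p.2 - m * u ≤ N * q * q := by
          have h2 : p.1 * p.2 ≤ N * q^2 := Nat.mul_le_mul hn.2 hv.2
          have h3 : N * q^2 = N * q * q := by ring
          omega
        calc (p.1 * p.2 - m * u) / q ≤ (N * q * q) / q := Nat.div_le_div_right h1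
          _ = N * q := by rw [Nat.mul_div_cancel _ hq0]
    rw [← Finset.sum_fiberwise_of_maps_to hmaps (fun p => 1 / (p.2:ℝ))]
    -- bound each fiber
    have hfiber : ∀ k ∈ Finset.Icc 1 (N*q),
        (∑ p ∈ s.filter (fun p => (p.1 * p.2 - m * u) / q = k), 1 / (p.2:ℝ))
        ≤ D * ((N:ℝ) / (k * q)) := by
      intro k hk
      rw [Finset.mem_Icc] at hk
      set F := s.filter (fun p => (p.1 * p.2 - m * u) / q = k) with hF
      have hFs : ∀ p ∈ F, p ∈ s ∧ p.1 * p.2 = m * u + k * q := by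
        intro p hp
        rw [hF, Finset.mem_filter] at hp
        obtain ⟨hps, hpk⟩ := hp
        obtain ⟨heq, hdvd⟩ := hkey p hps
        exact ⟨hps, by rw [← hpk]; exact heq⟩
      have hkq0 : 0 < k * q := Nat.mul_pos (by omega) hq0
      have hb0 : m * u + k * q ≠ 0 := by omega
      have hterm : ∀ p ∈ F, 1 / (p.2:ℝ) ≤ (N:ℝ) / (k * q) := by
        intro p hp
        obtain ⟨hps, hpb⟩ := hFs p hp
        obtain ⟨hn, hv, hmod, hlt⟩ := hmem p hps
        have hkq : k * q ≤ N * p.2 := by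
          calc k * q ≤ m * u + k * q := by omega
            _ = p.1 * p.2 := hpb.symm
            _ ≤ N * p.2 := Nat.mul_le_mul_right _ hn.2
        have hv0 : (0:ℝ) < (p.2:ℝ) := by
          have : 0 < p.2 := hv.1
          exact_mod_cast this
        have hkq0R : (0:ℝ) < (k:ℝ) * q := by
          have : (0:ℕ) < k * q := hkq0
          exact_mod_cast this
        rw [div_le_div_iff₀ hv0 hkq0R]
        have : (k:ℝ) * q ≤ (N:ℝ) * p.2 := by exact_mod_cast hkq
        nlinarith [this]
      have hcard : (F.card : ℝ) ≤ D := by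
        have hinj : F.card ≤ (m * u + k * q).divisors.card := by
          apply Finset.card_le_card_of_injOn (fun p => p.2)
          · intro p hp
            obtain ⟨hps, hpb⟩ := hFs p hp
            simp only [Finset.mem_coe]
            rw [Nat.mem_divisors]
            exact ⟨⟨p.1, by rw [← hpb]; ring⟩, hb0⟩
          · intro p1 h1 p2 h2 hv12
            obtain ⟨hps1, hpb1⟩ := hFs p1 h1
            obtain ⟨hps2, hpb2⟩ := hFs p2 h2
            obtain ⟨hn1, hv1, -, -⟩ := hmem p1 hps1
            have h12 : p1.1 * p1.2 = p2.1 * p1.2 := by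
              have hv12' : p1.2 = p2.2 := hv12
              rw [hpb1, hv12', hpb2]
            have h11 : p1.1 = p2.1 := Nat.eq_of_mul_eq_mul_right hv1.1 h12
            exact Prod.ext h11 hv12
        have hble : m * u + k * q ≤ 2 * q^3 := by
          have h1 : m * u ≤ q^3 := by
            have : m * u ≤ N * q^2 := Nat.mul_le_mul hm.2 hu.2
            nlinarith [this, hNq]
          have h2 : k * q ≤ q^3 := by
            have : k * q ≤ N * q * q := Nat.mul_le_mul_right _ hk.2
            nlinarith [this, hNq]
          omega
        calc (F.card : ℝ) ≤ ((m * u + k * q).divisors.card : ℝ) := by exact_mod_cast hinj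
          _ ≤ D := hD _ hb0 hble
      calc (∑ p ∈ F, 1 / (p.2:ℝ)) ≤ F.card • ((N:ℝ) / (k * q)) :=
            Finset.sum_le_card_nsmul F _ _ hterm
        _ = (F.card : ℝ) * ((N:ℝ) / (k * q)) := by rw [nsmul_eq_mul]
        _ ≤ D * ((N:ℝ) / (k * q)) := by
            apply mul_le_mul_of_nonneg_right hcard (by positivity)
    calc (∑ k ∈ Finset.Icc 1 (N*q),
            ∑ p ∈ s.filter (fun p => (p.1 * p.2 - m * u) / q = k), 1 / (p.2:ℝ))
        ≤ ∑ k ∈ Finset.Icc 1 (N*q), D * ((N:ℝ) / (k * q)) :=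
          Finset.sum_le_sum hfiber
      _ = D * (N:ℝ) / q * ∑ k ∈ Finset.Icc 1 (N*q), (1:ℝ)/k := by
          rw [Finset.mul_sum]
          apply Finset.sum_congr rfl
          intro k hk
          rw [Finset.mem_Icc] at hk
          have hk0 : (k:ℝ) ≠ 0 := by
            have : 0 < k := hk.1
            positivity
          have hq0' : (q:ℝ) ≠ 0 := by positivity
          rw [← mul_div_assoc, mul_one_div, div_div, mul_comm (q:ℝ) (k:ℝ)]
      _ ≤ D * (N:ℝ) / q * (1 + Real.log (N*q)) := by
          apply mul_le_mul_of_nonneg_left _ (by positivity)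
          have := harmonic_sum_le (N*q)
          calc (∑ k ∈ Finset.Icc 1 (N*q), (1:ℝ)/k) ≤ 1 + Real.log ((N*q : ℕ) : ℝ) := this
            _ = 1 + Real.log ((N:ℝ) * q) := by push_cast; ring_nf
  -- now the outer sums
  have hreorder : ∀ m : ℕ,
      (∑ n ∈ A, ∑ u ∈ B, ∑ v ∈ B,
        (if m * u ≡ n * v [MOD q] ∧ m * u < n * v then 1 / ((u:ℝ) * (v:ℝ)) else 0))
      = ∑ u ∈ B, ∑ n ∈ A, ∑ v ∈ B,
        (if m * u ≡ n * v [MOD q] ∧ m * u < n * v then 1 / ((u:ℝ) * (v:ℝ)) else 0) := by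
    intro m
    rw [Finset.sum_comm]
  have hfac : ∀ m u : ℕ, 1 ≤ u →
      (∑ n ∈ A, ∑ v ∈ B,
        (if m * u ≡ n * v [MOD q] ∧ m * u < n * v then 1 / ((u:ℝ) * (v:ℝ)) else 0))
      = (1/(u:ℝ)) * ∑ n ∈ A, ∑ v ∈ B,
        (if m * u ≡ n * v [MOD q] ∧ m * u < n * v then 1 / (v:ℝ) else 0) := by
    intro m u hu1
    rw [Finset.mul_sum]
    apply Finset.sum_congr rfl
    intro n _
    rw [Finset.mul_sum]
    apply Finset.sum_congr rfl
    intro v _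
    split
    · rw [div_mul_div_comm, one_mul]
    · rw [mul_zero]
  calc (∑ m ∈ A, ∑ n ∈ A, ∑ u ∈ B, ∑ v ∈ B,
          (if m * u ≡ n * v [MOD q] ∧ m * u < n * v then 1 / ((u:ℝ) * (v:ℝ)) else 0))
      = ∑ m ∈ A, ∑ u ∈ B, ∑ n ∈ A, ∑ v ∈ B,
          (if m * u ≡ n * v [MOD q] ∧ m * u < n * v then 1 / ((u:ℝ) * (v:ℝ)) else 0) := by
        exact Finset.sum_congr rfl fun m _ => hreorder m
    _ ≤ ∑ m ∈ A, ∑ u ∈ B, (1/(u:ℝ)) * (D * N / q * (1 + Real.log (N*q))) := by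
        apply Finset.sum_le_sum
        intro m hm
        apply Finset.sum_le_sum
        intro u hu
        have hu1 : 1 ≤ u := by
          rw [hBdef, Finset.mem_Icc] at hu; exact hu.1
        rw [hfac m u hu1]
        apply mul_le_mul_of_nonneg_left (inner m hm u hu) (by positivity)
    _ = (A.card : ℝ) * ((∑ u ∈ B, 1/(u:ℝ)) * (D * N / q * (1 + Real.log (N*q)))) := by
        simp only [← Finset.sum_mul]
        rw [Finset.sum_const, nsmul_eq_mul]
        ring
    _ ≤ (N:ℝ) * ((1 + Real.log (q^2)) * (D * N / q * (1 + Real.log (N*q)))) := by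
        have hA1 : (A.card : ℝ) = (N:ℝ) := by
          rw [hA, Nat.card_Icc]
          simp
        rw [hA1]
        apply mul_le_mul_of_nonneg_left _ (by positivity)
        have hlog1 : (0:ℝ) ≤ Real.log ((N:ℝ)*(q:ℝ)) := by
          apply Real.log_nonneg
          have h1 : (1:ℝ) ≤ (N:ℝ) := by exact_mod_cast hN
          have h2 : (1:ℝ) ≤ (q:ℝ) := by exact_mod_cast (by omega : 1 ≤ q)
          nlinarith
        have hC0 : (0:ℝ) ≤ D * N / q * (1 + Real.log ((N:ℝ)*(q:ℝ))) := by
          apply mul_nonneg (by positivity)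
          linarith
        apply mul_le_mul_of_nonneg_right _ hC0
        have := harmonic_sum_le (q^2)
        calc (∑ u ∈ B, 1/(u:ℝ)) ≤ 1 + Real.log ((q^2 : ℕ) : ℝ) := by rw [hBdef]; exact this
          _ = 1 + Real.log ((q:ℝ)^2) := by push_cast; ring_nf
    _ = (N:ℝ) * (1 + Real.log (q^2)) * (D * N / q * (1 + Real.log (N*q))) := by ring

lemma sum_split (q N : ℕ) :
    (∑ m ∈ Finset.Icc 1 N, ∑ n ∈ Finset.Icc 1 N,
      ∑ u ∈ Finset.Icc 1 (q ^ 2), ∑ v ∈ Finset.Icc 1 (q ^ 2),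
        if m * u ≡ n * v [MOD q] ∧ m * u ≠ n * v then 1 / ((u : ℝ) * (v : ℝ)) else 0)
    = 2 * ∑ m ∈ Finset.Icc 1 N, ∑ n ∈ Finset.Icc 1 N,
      ∑ u ∈ Finset.Icc 1 (q ^ 2), ∑ v ∈ Finset.Icc 1 (q ^ 2),
        (if m * u ≡ n * v [MOD q] ∧ m * u < n * v then 1 / ((u:ℝ) * (v:ℝ)) else 0) := by
  classical
  have hterm : ∀ m n u v : ℕ,
      (if m * u ≡ n * v [MOD q] ∧ m * u ≠ n * v then 1 / ((u:ℝ) * (v:ℝ)) else 0)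
      = (if m * u ≡ n * v [MOD q] ∧ m * u < n * v then 1 / ((u:ℝ) * (v:ℝ)) else 0)
        + (if m * u ≡ n * v [MOD q] ∧ n * v < m * u then 1 / ((u:ℝ) * (v:ℝ)) else 0) := by
    intro m n u v
    by_cases hmod : m * u ≡ n * v [MOD q]
    · rcases lt_trichotomy (m * u) (n * v) with h | h | h
      · rw [if_pos ⟨hmod, h.ne⟩, if_pos ⟨hmod, h⟩,
          if_neg (fun hc => (by omega : ¬ n * v < m * u) hc.2), add_zero]
      · rw [if_neg (fun hc => hc.2 h), if_neg (fun hc => (by omega : ¬ m * u < n * v) hc.2),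
          if_neg (fun hc => (by omega : ¬ n * v < m * u) hc.2)]
        ring
      · rw [if_pos ⟨hmod, h.ne'⟩, if_neg (fun hc => (by omega : ¬ m * u < n * v) hc.2),
          if_pos ⟨hmod, h⟩, zero_add]
    · rw [if_neg (fun hc => hmod hc.1), if_neg (fun hc => hmod hc.1),
        if_neg (fun hc => hmod hc.1), add_zero]
  have hsum : (∑ m ∈ Finset.Icc 1 N, ∑ n ∈ Finset.Icc 1 N,
      ∑ u ∈ Finset.Icc 1 (q ^ 2), ∑ v ∈ Finset.Icc 1 (q ^ 2),
        if m * u ≡ n * v [MOD q] ∧ m * u ≠ n * v then 1 / ((u:ℝ) * (v:ℝ)) else 0)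
      = (∑ m ∈ Finset.Icc 1 N, ∑ n ∈ Finset.Icc 1 N,
          ∑ u ∈ Finset.Icc 1 (q ^ 2), ∑ v ∈ Finset.Icc 1 (q ^ 2),
            (if m * u ≡ n * v [MOD q] ∧ m * u < n * v then 1 / ((u:ℝ) * (v:ℝ)) else 0))
        + (∑ m ∈ Finset.Icc 1 N, ∑ n ∈ Finset.Icc 1 N,
          ∑ u ∈ Finset.Icc 1 (q ^ 2), ∑ v ∈ Finset.Icc 1 (q ^ 2),
            (if m * u ≡ n * v [MOD q] ∧ n * v < m * u then 1 / ((u:ℝ) * (v:ℝ)) else 0)) := by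
    simp only [hterm, Finset.sum_add_distrib]
  rw [hsum]
  have hswap : (∑ m ∈ Finset.Icc 1 N, ∑ n ∈ Finset.Icc 1 N,
          ∑ u ∈ Finset.Icc 1 (q ^ 2), ∑ v ∈ Finset.Icc 1 (q ^ 2),
            (if m * u ≡ n * v [MOD q] ∧ n * v < m * u then 1 / ((u:ℝ) * (v:ℝ)) else 0))
      = (∑ m ∈ Finset.Icc 1 N, ∑ n ∈ Finset.Icc 1 N,
          ∑ u ∈ Finset.Icc 1 (q ^ 2), ∑ v ∈ Finset.Icc 1 (q ^ 2),
            (if m * u ≡ n * v [MOD q] ∧ m * u < n * v then 1 / ((u:ℝ) * (v:ℝ)) else 0)) := by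
    rw [Finset.sum_comm]
    refine Finset.sum_congr rfl fun a _ => ?_
    refine Finset.sum_congr rfl fun b _ => ?_
    rw [Finset.sum_comm]
    refine Finset.sum_congr rfl fun c _ => ?_
    refine Finset.sum_congr rfl fun d _ => ?_
    have hiff : (b * d ≡ a * c [MOD q] ∧ a * c < b * d) ↔
        (a * c ≡ b * d [MOD q] ∧ a * c < b * d) :=
      and_congr ⟨Nat.ModEq.symm, Nat.ModEq.symm⟩ Iff.rfl
    rw [if_congr hiff (by rw [mul_comm]) rfl]
  rw [hswap]
  ring

/-- For every `ε > 0` there is `C = C(ε) > 0` such that for all integers `q > N ≥ 1`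
with `q ≥ 2`, one has `M₂(q,N) ≤ C N² qᵉ`. -/
theorem M2_bound :
    ∀ ε : ℝ, 0 < ε → ∃ C : ℝ, 0 < C ∧ ∀ q N : ℕ, 2 ≤ q → 1 ≤ N → N < q →
      M2 q N ≤ C * (N : ℝ) ^ 2 * (q : ℝ) ^ ε := by
  intro ε hε
  obtain ⟨Cd, hCd1, hCd⟩ := divisor_bound (show 0 < ε/6 by linarith)
  have hCd0 : 0 < Cd := lt_of_lt_of_le one_pos hCd1
  refine ⟨2 * (Cd * 2 ^ (ε/6)) * (1 + 16/ε)^2, by positivity, ?_⟩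
  intro q N hq hN hNq
  have hqR : (0:ℝ) < (q:ℝ) := by exact_mod_cast (by omega : 0 < q)
  have hq1 : (1:ℝ) ≤ (q:ℝ) := by exact_mod_cast (by omega : 1 ≤ q)
  have hNR : (1:ℝ) ≤ (N:ℝ) := by exact_mod_cast hN
  have hNqR : (N:ℝ) ≤ (q:ℝ) := by exact_mod_cast hNq.le
  set D : ℝ := Cd * 2 ^ (ε/6) * (q:ℝ) ^ (ε/2) with hDdef
  have hD0 : 0 ≤ D := by positivity
  have hD : ∀ b : ℕ, b ≠ 0 → b ≤ 2*q^3 → ((b.divisors.card : ℕ) : ℝ) ≤ D := by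
    intro b hb0 hble
    have h1 : ((b.divisors.card : ℕ) : ℝ) ≤ Cd * (b:ℝ) ^ (ε/6) := hCd b hb0
    have h2 : (b:ℝ) ^ (ε/6) ≤ ((2*q^3 : ℕ) : ℝ) ^ (ε/6) :=
      Real.rpow_le_rpow (Nat.cast_nonneg b) (by exact_mod_cast hble) (by linarith)
    have h3 : ((2*q^3 : ℕ) : ℝ) ^ (ε/6) = 2 ^ (ε/6) * (q:ℝ) ^ (ε/2) := by
      have hcast : ((2*q^3 : ℕ) : ℝ) = 2 * (q:ℝ)^(3:ℕ) := by push_cast; ring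
      rw [hcast, Real.mul_rpow (by norm_num) (by positivity)]
      congr 1
      rw [← Real.rpow_natCast (q:ℝ) 3, ← Real.rpow_mul hqR.le]
      congr 1
      push_cast
      ring
    calc ((b.divisors.card : ℕ) : ℝ) ≤ Cd * (b:ℝ) ^ (ε/6) := h1
      _ ≤ Cd * ((2*q^3 : ℕ) : ℝ) ^ (ε/6) := by
          apply mul_le_mul_of_nonneg_left h2 (le_of_lt hCd0)
      _ = D := by rw [h3, hDdef]; ring
  have hT := half_bound q N hq hN hNq D hD0 hD
  set T : ℝ := ∑ m ∈ Finset.Icc 1 N, ∑ n ∈ Finset.Icc 1 N,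
      ∑ u ∈ Finset.Icc 1 (q^2), ∑ v ∈ Finset.Icc 1 (q^2),
        (if m * u ≡ n * v [MOD q] ∧ m * u < n * v then 1 / ((u:ℝ) * (v:ℝ)) else 0) with hTdef
  have hT0 : 0 ≤ T := by
    rw [hTdef]
    apply Finset.sum_nonneg; intro m _
    apply Finset.sum_nonneg; intro n _
    apply Finset.sum_nonneg; intro u _
    apply Finset.sum_nonneg; intro v _
    split
    · positivity
    · exact le_refl 0
  have hphi : (Nat.totient q : ℝ) ≤ (q:ℝ) := by exact_mod_cast Nat.totient_le q
  have hM2eq : M2 q N = (Nat.totient q : ℝ) * (2 * T) := by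
    rw [M2, sum_split q N, ← hTdef]
  clear_value T
  set L1 : ℝ := 1 + Real.log ((q:ℝ)^2) with hL1def
  set L2 : ℝ := 1 + Real.log ((N:ℝ)*(q:ℝ)) with hL2def
  have hL1nn : 0 ≤ L1 := by
    rw [hL1def]
    have : 0 ≤ Real.log ((q:ℝ)^2) := Real.log_nonneg (by nlinarith)
    linarith
  have hL2nn : 0 ≤ L2 := by
    rw [hL2def]
    have : 0 ≤ Real.log ((N:ℝ)*(q:ℝ)) := Real.log_nonneg (by nlinarith)
    linarith
  have hrpow1 : (1:ℝ) ≤ (q:ℝ) ^ (ε/8) := Real.one_le_rpow hq1 (by linarith)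
  have hlogq : Real.log (q:ℝ) ≤ (q:ℝ) ^ (ε/8) / (ε/8) :=
    Real.log_le_rpow_div hqR.le (by linarith)
  have hL1b : L1 ≤ (1 + 16/ε) * (q:ℝ) ^ (ε/8) := by
    rw [hL1def, Real.log_pow]
    have h16 : (2:ℝ) * Real.log (q:ℝ) ≤ (16/ε) * (q:ℝ) ^ (ε/8) := by
      calc (2:ℝ) * Real.log (q:ℝ) ≤ 2 * ((q:ℝ) ^ (ε/8) / (ε/8)) := by linarith
        _ = (16/ε) * (q:ℝ) ^ (ε/8) := by
            field_simp
            ring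
    have hexpand : (1 + 16/ε) * (q:ℝ) ^ (ε/8)
        = (q:ℝ) ^ (ε/8) + (16/ε) * (q:ℝ) ^ (ε/8) := by ring
    linarith [hrpow1]
  have hL2b : L2 ≤ (1 + 16/ε) * (q:ℝ) ^ (ε/8) := by
    have hle : L2 ≤ L1 := by
      rw [hL1def, hL2def]
      have : Real.log ((N:ℝ)*(q:ℝ)) ≤ Real.log ((q:ℝ)^2) := by
        apply Real.log_le_log (by positivity)
        nlinarith
      linarith
    linarith
  -- main chain
  have hstep1 : M2 q N ≤ (q:ℝ) * (2 * T) := by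
    rw [hM2eq]
    apply mul_le_mul_of_nonneg_right hphi (by linarith)
  have hstep2 : (q:ℝ) * (2 * T) ≤ (q:ℝ) * (2 * ((N:ℝ) * L1 * (D * N / q * L2))) := by
    apply mul_le_mul_of_nonneg_left _ hqR.le
    have := hT
    linarith
  have hstep3 : (q:ℝ) * (2 * ((N:ℝ) * L1 * (D * N / q * L2)))
      = 2 * D * (N:ℝ)^2 * L1 * L2 := by
    field_simp
  have hstep4 : 2 * D * (N:ℝ)^2 * L1 * L2
      ≤ 2 * D * (N:ℝ)^2 * ((1 + 16/ε) * (q:ℝ) ^ (ε/8)) * ((1 + 16/ε) * (q:ℝ) ^ (ε/8)) := by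
    have h2DN : 0 ≤ 2 * D * (N:ℝ)^2 := by positivity
    apply mul_le_mul (mul_le_mul_of_nonneg_left hL1b h2DN) hL2b hL2nn
    positivity
  have hstep5 : 2 * D * (N:ℝ)^2 * ((1 + 16/ε) * (q:ℝ) ^ (ε/8)) * ((1 + 16/ε) * (q:ℝ) ^ (ε/8))
      = (2 * (Cd * 2 ^ (ε/6)) * (1 + 16/ε)^2) * (N:ℝ)^2 *
        ((q:ℝ) ^ (ε/2) * (q:ℝ) ^ (ε/8) * (q:ℝ) ^ (ε/8)) := by
    rw [hDdef]
    ring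
  have hstep6 : (q:ℝ) ^ (ε/2) * (q:ℝ) ^ (ε/8) * (q:ℝ) ^ (ε/8) ≤ (q:ℝ) ^ ε := by
    rw [← Real.rpow_add hqR, ← Real.rpow_add hqR]
    apply Real.rpow_le_rpow_of_exponent_le hq1
    linarith
  calc M2 q N ≤ (q:ℝ) * (2 * T) := hstep1
    _ ≤ (q:ℝ) * (2 * ((N:ℝ) * L1 * (D * N / q * L2))) := hstep2
    _ = 2 * D * (N:ℝ)^2 * L1 * L2 := hstep3
    _ ≤ 2 * D * (N:ℝ)^2 * ((1 + 16/ε) * (q:ℝ) ^ (ε/8)) * ((1 + 16/ε) * (q:ℝ) ^ (ε/8)) := hstep4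
    _ = (2 * (Cd * 2 ^ (ε/6)) * (1 + 16/ε)^2) * (N:ℝ)^2 *
        ((q:ℝ) ^ (ε/2) * (q:ℝ) ^ (ε/8) * (q:ℝ) ^ (ε/8)) := hstep5
    _ ≤ (2 * (Cd * 2 ^ (ε/6)) * (1 + 16/ε)^2) * (N:ℝ)^2 * (q:ℝ) ^ ε := by
        apply mul_le_mul_of_nonneg_left hstep6 (by positivity)
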